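/- Let Q ∈ S^n and let e ∈ ℝ^n be the all-ones vector. Then inf{xᵀ·Q·x : x ∈ ℝ^n_+, eᵀ·x = 1} = inf{⟨Q,X⟩ : X ∈ CP^n, ⟨e·eᵀ, X⟩ = 1}; that is, the completely positive programming relaxation of the standard quadratic optimization problem over the simplex is exact for every Q. -/

import Mathlib

open Matrix

noncomputable section

/-- The completely positive cone `CP^n`. -/
def CP (n : ℕ) : Set (Matrix (Fin n) (Fin n) ℝ) :=
  convexHull ℝ {X | ∃ x : Fin n → ℝ, 0 ≤ x ∧ X = vecMulVec x x}

lemma tr_mul_vmv {n : ℕ} (A : Matrix (Fin n) (Fin n) ℝ) (x y : Fin n → ℝ) :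
    (A * vecMulVec x y).trace = y ⬝ᵥ A.mulVec x := by
  simp only [trace, Matrix.mul_apply, vecMulVec_apply, dotProduct, mulVec, diag_apply,
    Finset.mul_sum]
  apply Finset.sum_congr rfl; intros; apply Finset.sum_congr rfl; intros; ring

/-- Bomze et al.: the CPP relaxation of the standard quadratic
optimization problem over the simplex is exact for every `Q`.  Infima are taken
in `EReal`. -/
theorem stmt_18 (n : ℕ) (Q : Matrix (Fin n) (Fin n) ℝ) (hQsym : Q.IsSymm) :
    sInf ((fun x : Fin n → ℝ => ((dotProduct x (Q.mulVec x) : ℝ) : EReal)) ''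
      {x | 0 ≤ x ∧ dotProduct (fun _ => (1 : ℝ)) x = 1}) =
    sInf ((fun X : Matrix (Fin n) (Fin n) ℝ => (((Q * X).trace : ℝ) : EReal)) ''
      {X | X ∈ CP n ∧
        ((vecMulVec (fun _ => (1 : ℝ)) (fun _ => (1 : ℝ))) * X).trace = 1}) := by
  apply le_antisymm
  · -- LHS ≤ RHS
    apply le_sInf
    rintro b ⟨X, ⟨hXcp, hXc⟩, rfl⟩
    rw [CP, convexHull_eq] at hXcp
    obtain ⟨ι, t, w, z, hw, hw1, hz, hX⟩ := hXcp
    choose! x hx0 hxz using hz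
    rw [Finset.centerMass_eq_of_sum_1 _ _ hw1] at hX
    -- notation
    set V : ℝ := (Q * X).trace with hV
    set T : ι → ℝ := fun i => (fun _ => (1 : ℝ)) ⬝ᵥ x i with hT
    have hT0 : ∀ i ∈ t, 0 ≤ T i := by
      intro i hi
      exact Finset.sum_nonneg fun j _ => by
        simpa using mul_nonneg zero_le_one (hx0 i hi j)
    have hTzero : ∀ i ∈ t, T i = 0 → x i = 0 := by
      intro i hi h0
      funext j
      have := (Finset.sum_eq_zero_iff_of_nonneg
        (fun k _ => by simpa using mul_nonneg zero_le_one (hx0 i hi k))).1 h0 j (by simp)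
      simpa using this
    -- value decomposition
    have hVdecomp : V = ∑ i ∈ t, w i * (x i ⬝ᵥ Q.mulVec (x i)) := by
      rw [hV, ← hX, Matrix.mul_sum, trace_sum]
      apply Finset.sum_congr rfl
      intro i hi
      rw [Matrix.mul_smul, trace_smul, hxz i hi, tr_mul_vmv]
      simp [smul_eq_mul]
    -- constraint decomposition
    have hCdecomp : (∑ i ∈ t, w i * (T i) ^ 2) = 1 := by
      rw [← hXc, ← hX, Matrix.mul_sum, trace_sum]
      apply Finset.sum_congr rfl
      intro i hi
      rw [Matrix.mul_smul, trace_smul, hxz i hi, tr_mul_vmv]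
      simp only [smul_eq_mul]
      congr 1
      simp [hT, dotProduct, mulVec, vecMulVec_apply, sq, Finset.sum_mul]
    -- key claim
    have hkey : ∃ i ∈ t, 0 < T i ∧ x i ⬝ᵥ Q.mulVec (x i) ≤ (T i) ^ 2 * V := by
      by_contra h
      push_neg at h
      have hle : ∀ i ∈ t, w i * (T i) ^ 2 * V ≤ w i * (x i ⬝ᵥ Q.mulVec (x i)) := by
        intro i hi
        rcases eq_or_lt_of_le (hw i hi) with hw0 | hwpos
        · rw [← hw0]; simp
        rcases eq_or_lt_of_le (hT0 i hi) with hTeq | hTpos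
        · rw [hTzero i hi hTeq.symm, ← hTeq]; simp
        · have := h i hi hTpos
          nlinarith
      obtain ⟨i0, hi0, hne⟩ : ∃ i ∈ t, w i * (T i) ^ 2 ≠ 0 := by
        by_contra hc
        push_neg at hc
        rw [Finset.sum_eq_zero hc] at hCdecomp
        norm_num at hCdecomp
      have hi0pos : 0 < w i0 * (T i0) ^ 2 :=
        lt_of_le_of_ne (mul_nonneg (hw i0 hi0) (sq_nonneg _)) (Ne.symm hne)
      have hw0pos : 0 < w i0 := by
        rcases eq_or_lt_of_le (hw i0 hi0) with h0 | h0
        · exfalso; rw [← h0] at hi0pos; simp at hi0pos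
        · exact h0
      have hT0pos : 0 < T i0 := by
        rcases eq_or_lt_of_le (hT0 i0 hi0) with h0 | h0
        · exfalso; rw [← h0] at hi0pos; simp at hi0pos
        · exact h0
      have hstrict : w i0 * (T i0) ^ 2 * V < w i0 * (x i0 ⬝ᵥ Q.mulVec (x i0)) := by
        have := h i0 hi0 hT0pos
        nlinarith
      have hsum : ∑ i ∈ t, w i * (T i) ^ 2 * V < ∑ i ∈ t, w i * (x i ⬝ᵥ Q.mulVec (x i)) :=
        Finset.sum_lt_sum hle ⟨i0, hi0, hstrict⟩
      rw [← hVdecomp] at hsum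
      rw [← Finset.sum_mul, hCdecomp, one_mul] at hsum
      exact lt_irrefl V hsum
    obtain ⟨i, hi, hTpos, hval⟩ := hkey
    -- feasible point
    set y : Fin n → ℝ := (T i)⁻¹ • x i with hy
    have hy0 : 0 ≤ y := smul_nonneg (by positivity) (hx0 i hi)
    have hy1 : dotProduct (fun _ => (1 : ℝ)) y = 1 := by
      rw [hy, dotProduct_smul, smul_eq_mul]
      have hTi : (fun _ => (1 : ℝ)) ⬝ᵥ x i = T i := rfl
      rw [hTi, inv_mul_cancel₀ (ne_of_gt hTpos)]
    have hyval : y ⬝ᵥ Q.mulVec y ≤ V := by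
      rw [hy]
      rw [smul_dotProduct, Matrix.mulVec_smul, dotProduct_smul]
      simp only [smul_eq_mul]
      have hinv : (0:ℝ) ≤ (T i)⁻¹ := by positivity
      have key : (T i)⁻¹ * ((T i)⁻¹ * ((T i) ^ 2 * V)) = V := by
        field_simp
      have h1 := mul_le_mul_of_nonneg_left hval hinv
      have h2 := mul_le_mul_of_nonneg_left h1 hinv
      rw [key] at h2
      exact h2
    calc sInf ((fun x : Fin n → ℝ => ((dotProduct x (Q.mulVec x) : ℝ) : EReal)) ''
          {x | 0 ≤ x ∧ dotProduct (fun _ => (1 : ℝ)) x = 1})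
        ≤ ((y ⬝ᵥ Q.mulVec y : ℝ) : EReal) := sInf_le ⟨y, ⟨hy0, hy1⟩, rfl⟩
      _ ≤ ((V : ℝ) : EReal) := by exact_mod_cast hyval
  · -- RHS ≤ LHS
    apply le_sInf
    rintro b ⟨y, ⟨hy0, hy1⟩, rfl⟩
    apply sInf_le
    refine ⟨vecMulVec y y, ⟨subset_convexHull ℝ _ ⟨y, hy0, rfl⟩, ?_⟩, ?_⟩
    swap
    · show (((Q * vecMulVec y y).trace : ℝ) : EReal) = _
      rw [tr_mul_vmv]
    rw [tr_mul_vmv]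
    have : (vecMulVec (fun _ : Fin n => (1 : ℝ)) (fun _ : Fin n => (1 : ℝ))).mulVec y
        = fun _ : Fin n => (1 : ℝ) := by
      funext j
      simp only [mulVec, dotProduct, vecMulVec_apply, one_mul]
      simpa [dotProduct] using hy1
    rw [this]
    have : y ⬝ᵥ (fun _ : Fin n => (1 : ℝ)) = (fun _ : Fin n => (1:ℝ)) ⬝ᵥ y := dotProduct_comm _ _
    rw [this, hy1]
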